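/- There is a comeager set of functions α ∈ 2^{(2^{<ℕ})^{<ℕ} × ℕ × ℕ} (with the product topology) such that for all x, y ∈ (2^ℕ)^ℕ with x separated and y injective and separated, the following hold for γ = γ_α and N = ℕ^{<ℕ} × ℕ: (i) for every finite partial function τ : N → 2 there are infinitely many (t,k) ∈ N such that the function (s,d) ↦ γ(y)(t,k)(s,d) extends τ; (ii) for all finite partial functions τ_1 : N → 2 and τ_2 : N → 2 there are infinitely many (s,d) ∈ N such that the function (t,k) ↦ γ(y)(t,k)(s,d) extends τ_1 and the function (t,k) ↦ γ(x)(s,d)(t,k) extends τ_2. -/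
import Mathlib


open MeasureTheory

/-- Iterated powerset type over Cantor space: `It 0 = 2^ℕ`, `It (m+1) = Set (It m)`. -/
def It : ℕ → Type
  | 0 => ℕ → Bool
  | m + 1 => Set (It m)

/-- `aF x m l` is the set `a^{x,l}_{m+1}` from the recursive construction. -/
def aF (x : ℕ → ℕ → ℕ → Bool) : (m : ℕ) → ℕ → It (m + 1)
  | 0, l => {z : It 0 | ∃ k, x 1 l k = true ∧ z = x 0 k}
  | m + 1, l => {z : It (m + 1) | ∃ k, x (m + 2) l k = true ∧ z = aF x m k}

/-- `AS x m` is the set `A^x_{m+1}` from the recursive construction. -/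
def AS (x : ℕ → ℕ → ℕ → Bool) : (m : ℕ) → It (m + 1)
  | 0 => {z : It 0 | ∃ k, z = x 0 k}
  | m + 1 => {z : It (m + 1) | ∃ k, z = aF x m k}

/-- Extension of a finite tuple to an infinite sequence, by a junk value. -/
def extFin {n : ℕ} (x : Fin n → ℕ → ℕ → Bool) : ℕ → ℕ → ℕ → Bool :=
  fun i => if h : i < n then x ⟨i, h⟩ else fun _ _ => true

/-- The domain `X_n ⊆ ((2^ℕ)^ℕ)^n`. -/
def XSet (n : ℕ) : Set (Fin n → ℕ → ℕ → Bool) :=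
  {x | ∀ (i : ℕ) (_ : 1 ≤ i) (hn : i < n),
    (∀ m, ∃ k, x ⟨i, hn⟩ k m = true) ∧
    (∀ k, ∃ m, x ⟨i, hn⟩ k m = true) ∧
    (∀ k l₁ l₂,
      x ⟨i - 1, Nat.lt_of_le_of_lt (Nat.sub_le i 1) hn⟩ l₁ =
        x ⟨i - 1, Nat.lt_of_le_of_lt (Nat.sub_le i 1) hn⟩ l₂ →
      x ⟨i, hn⟩ k l₁ = x ⟨i, hn⟩ k l₂)}

/-- The domain `X_ω ⊆ ((2^ℕ)^ℕ)^ω`. -/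
def XInf : Set (ℕ → ℕ → ℕ → Bool) :=
  {x | ∀ (i : ℕ) (_ : 1 ≤ i),
    (∀ m, ∃ k, x i k m = true) ∧
    (∀ k, ∃ m, x i k m = true) ∧
    (∀ k l₁ l₂, x (i - 1) l₁ = x (i - 1) l₂ → x i k l₁ = x i k l₂)}

/-- The relation `F_n` (`x F_n y ↔ A^x_n = A^y_n`), as a relation on the ambient space.
For `n = 0` this is the trivial (full) relation. -/
def Ffin (n : ℕ) (x y : Fin n → ℕ → ℕ → Bool) : Prop :=
  AS (extFin x) (n - 1) = AS (extFin y) (n - 1)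

/-- The relation `F_ω` : `x F_ω y ↔ ∀ k ≥ 1, A^x_k = A^y_k`. -/
def Fomega (x y : ℕ → ℕ → ℕ → Bool) : Prop :=
  ∀ m, AS x m = AS y m

/-- The projection `u^n_k` to the first `k` coordinates. -/
def projFin {n : ℕ} (k : ℕ) (h : k ≤ n) (x : Fin n → ℕ → ℕ → Bool) :
    Fin k → ℕ → ℕ → Bool :=
  fun i => x (Fin.castLE h i)

/-- The projection `u^ω_k` to the first `k` coordinates. -/
def projInf (k : ℕ) (x : ℕ → ℕ → ℕ → Bool) : Fin k → ℕ → ℕ → Bool :=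
  fun i => x i.val

theorem projFin_mem {n k : ℕ} (h : k ≤ n) {x : Fin n → ℕ → ℕ → Bool}
    (hx : x ∈ XSet n) : projFin k h x ∈ XSet k :=
  fun i h1 hik => hx i h1 (lt_of_lt_of_le hik h)

theorem projInf_mem (k : ℕ) {x : ℕ → ℕ → ℕ → Bool} (hx : x ∈ XInf) :
    projInf k x ∈ XSet k :=
  fun i h1 _ => hx i h1

def projSubFin {n : ℕ} (k : ℕ) (h : k ≤ n) (x : ↥(XSet n)) : ↥(XSet k) :=
  ⟨projFin k h x.1, projFin_mem h x.2⟩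

def projSubInf (k : ℕ) (x : ↥XInf) : ↥(XSet k) :=
  ⟨projInf k x.1, projInf_mem k x.2⟩

/-- The domains of the iterated Friedman–Stanley jumps. -/
def fsSpace : ℕ → Type
  | 0 => ℕ → Bool
  | n + 1 => ℕ → fsSpace n

/-- The Friedman–Stanley jump of an equivalence relation. -/
def fsJump {X : Type} (E : X → X → Prop) (x y : ℕ → X) : Prop :=
  (∀ n, ∃ m, E (x n) (y m)) ∧ (∀ n, ∃ m, E (y n) (x m))

/-- The iterated Friedman–Stanley jump `=^{+n}`. -/
def fsIter : (n : ℕ) → fsSpace n → fsSpace n → Prop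
  | 0 => Eq
  | n + 1 => fsJump (fsIter n)

instance fsSpaceTopologicalSpace : (n : ℕ) → TopologicalSpace (fsSpace n)
  | 0 => inferInstanceAs (TopologicalSpace (ℕ → Bool))
  | n + 1 =>
    letI := fsSpaceTopologicalSpace n
    inferInstanceAs (TopologicalSpace (ℕ → fsSpace n))

instance fsSpaceMeasurableSpace : (n : ℕ) → MeasurableSpace (fsSpace n)
  | 0 => inferInstanceAs (MeasurableSpace (ℕ → Bool))
  | n + 1 =>
    letI := fsSpaceMeasurableSpace n
    inferInstanceAs (MeasurableSpace (ℕ → fsSpace n))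

/-- `=^{+ω}`, the product of the `=^{+k}`. -/
def fsOmega (x y : ∀ k, fsSpace k) : Prop :=
  ∀ k, fsIter k (x k) (y k)

/-- Borel reducibility of equivalence relations. -/
def BorelReducible {X Y : Type*} [MeasurableSpace X] [MeasurableSpace Y]
    (E : X → X → Prop) (F : Y → Y → Prop) : Prop :=
  ∃ f : X → Y, Measurable f ∧ ∀ a b, E a b ↔ F (f a) (f b)

/-- The Polish topology of pointwise convergence on the symmetric group of a
(countable, discrete) set. -/
def permTopology (A : Type*) : TopologicalSpace (Equiv.Perm A) :=
  TopologicalSpace.induced (fun g => (g : A → A))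
    (@Pi.topologicalSpace A (fun _ => A) fun _ => ⊥)

/-- The orbit equivalence relation of an action. -/
def OrbitRel {G Y : Type*} (act : G → Y → Y) (y₁ y₂ : Y) : Prop :=
  ∃ g, act g y₁ = y₂

/-- Classifiable by countable structures: Borel reducible to the orbit equivalence
relation of a continuous action of `S_∞` on a Polish space. -/
def ClassifiableByCountableStructures {X : Type*} [MeasurableSpace X]
    (E : X → X → Prop) : Prop :=
  ∃ (Y : Type) (_ : TopologicalSpace Y) (_ : MeasurableSpace Y),
    PolishSpace Y ∧ BorelSpace Y ∧
    ∃ act : Equiv.Perm ℕ → Y → Y,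
      (∀ y, act 1 y = y) ∧
      (∀ g h y, act (g * h) y = act g (act h y)) ∧
      (letI := permTopology ℕ
       Continuous fun p : Equiv.Perm ℕ × Y => act p.1 p.2) ∧
      BorelReducible E (OrbitRel act)

/-- `E` is prime to `F`. -/
def PrimeTo {X Y : Type*} [MeasurableSpace X] [MeasurableSpace Y]
    (E : X → X → Prop) (F : Y → Y → Prop) : Prop :=
  ∀ f : X → Y, Measurable f → (∀ a b, E a b → F (f a) (f b)) →
    ∃ y : Y, BorelReducible E (fun a b : {x : X // F (f x) y} => E a.1 b.1)

/-- A sequence of elements of Cantor space is separated if any two distinct naturals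
are separated by some member of the sequence. -/
def SeqSeparated (z : ℕ → ℕ → Bool) : Prop :=
  ∀ a b : ℕ, a ≠ b → ∃ i, z i a ≠ z i b

/-- The countable index set `N = ℕ^{<ℕ} × ℕ`. -/
abbrev NIdx : Type := List ℕ × ℕ

/-- The map `γ_α : (2^ℕ)^ℕ → (2^N)^N` determined by
`α : (2^{<ℕ})^{<ℕ} × ℕ × ℕ → 2`, namely
`γ_α(x)(t,k)(s,d) = α(x(t₁)∘s, …, x(t_r)∘s, d, k)`. -/
def gammaA (α : List (List Bool) × ℕ × ℕ → Bool) (x : ℕ → ℕ → Bool) :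
    NIdx → NIdx → Bool :=
  fun tk sd => α (tk.1.map fun j => sd.1.map (x j), sd.2, tk.2)



abbrev KIdx : Type := List (List Bool) × ℕ
abbrev CIdx : Type := List (List Bool) × ℕ × ℕ

/-- The basic dense open sets. -/
def Dset (n : ℕ) (A B P Q : List KIdx) : Set (CIdx → Bool) :=
  {α | ((∀ e ∈ A, e ∉ B) ∧ (∀ e ∈ P, e ∉ Q)) →
    ∃ d, n ≤ d ∧ (∀ e ∈ A, α (e.1, d, e.2) = true) ∧
      (∀ e ∈ B, α (e.1, d, e.2) = false) ∧
      (∀ e ∈ P, α (e.1, e.2, d) = true) ∧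
      (∀ e ∈ Q, α (e.1, e.2, d) = false)}

lemma le_foldr_max (l : List KIdx) : ∀ e ∈ l, e.2 ≤ l.foldr (fun e m => max e.2 m) 0 := by
  induction l with
  | nil => simp
  | cons a l ih =>
    intro e he
    rcases List.mem_cons.1 he with rfl | he
    · simp [List.foldr]
    · exact le_trans (ih e he) (by simp [List.foldr])

lemma isOpen_eval (c : CIdx) (b : Bool) : IsOpen {α : CIdx → Bool | α c = b} := by
  have : {α : CIdx → Bool | α c = b} = (fun α : CIdx → Bool => α c) ⁻¹' {b} := by
    ext; simp
  rw [this]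
  exact (continuous_apply c).isOpen_preimage _ (isOpen_discrete _)

lemma isOpen_list_cond (l : List KIdx) (f : KIdx → CIdx) (b : Bool) :
    IsOpen {α : CIdx → Bool | ∀ e ∈ l, α (f e) = b} := by
  have : {α : CIdx → Bool | ∀ e ∈ l, α (f e) = b} =
      ⋂ e ∈ {e | e ∈ l}, {α : CIdx → Bool | α (f e) = b} := by
    ext α; simp
  rw [this]
  exact l.finite_toSet.isOpen_biInter fun e _ => isOpen_eval _ _

lemma isOpen_Dset (n : ℕ) (A B P Q : List KIdx) : IsOpen (Dset n A B P Q) := by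
  by_cases hg : (∀ e ∈ A, e ∉ B) ∧ (∀ e ∈ P, e ∉ Q)
  · have : Dset n A B P Q = ⋃ d, ⋃ (_ : n ≤ d),
        ({α : CIdx → Bool | ∀ e ∈ A, α (e.1, d, e.2) = true} ∩
         {α : CIdx → Bool | ∀ e ∈ B, α (e.1, d, e.2) = false} ∩
         {α : CIdx → Bool | ∀ e ∈ P, α (e.1, e.2, d) = true} ∩
         {α : CIdx → Bool | ∀ e ∈ Q, α (e.1, e.2, d) = false}) := by
      ext α
      simp only [Dset, Set.mem_setOf_eq, Set.mem_iUnion, Set.mem_inter_iff]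
      constructor
      · rintro h; obtain ⟨d, hd, h1, h2, h3, h4⟩ := h hg
        exact ⟨d, hd, ⟨⟨h1, h2⟩, h3⟩, h4⟩
      · rintro ⟨d, hd, ⟨⟨h1, h2⟩, h3⟩, h4⟩ _
        exact ⟨d, hd, h1, h2, h3, h4⟩
    rw [this]
    exact isOpen_iUnion fun d => isOpen_iUnion fun _ =>
      (((isOpen_list_cond A (fun e => (e.1, d, e.2)) true).inter
        (isOpen_list_cond B (fun e => (e.1, d, e.2)) false)).inter
        (isOpen_list_cond P (fun e => (e.1, e.2, d)) true)).inter
        (isOpen_list_cond Q (fun e => (e.1, e.2, d)) false)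
  · have : Dset n A B P Q = Set.univ := by
      ext α; simp only [Dset, Set.mem_setOf_eq, Set.mem_univ, iff_true]
      intro h; exact absurd h hg
    rw [this]; exact isOpen_univ


def patch (α₀ : CIdx → Bool) (d : ℕ) (A B P Q : List KIdx) : CIdx → Bool := fun c =>
  if c.2.1 = d ∧ (c.1, c.2.2) ∈ A then true
  else if c.2.1 = d ∧ (c.1, c.2.2) ∈ B then false
  else if c.2.2 = d ∧ (c.1, c.2.1) ∈ P then true
  else if c.2.2 = d ∧ (c.1, c.2.1) ∈ Q then false
  else α₀ c

lemma patch_A {α₀ d A B P Q} {e : KIdx} (he : e ∈ A) :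
    patch α₀ d A B P Q (e.1, d, e.2) = true := by
  unfold patch
  rw [if_pos ⟨rfl, he⟩]

lemma patch_B {α₀ d A B P Q} {e : KIdx} (he : e ∈ B) (hAB : ∀ a ∈ A, a ∉ B) :
    patch α₀ d A B P Q (e.1, d, e.2) = false := by
  unfold patch
  rw [if_neg, if_pos ⟨rfl, he⟩]
  rintro ⟨-, h⟩
  exact hAB _ h he

lemma patch_P {α₀ d A B P Q} {e : KIdx} (he : e ∈ P) (hne : e.2 ≠ d) :
    patch α₀ d A B P Q (e.1, e.2, d) = true := by
  unfold patch
  rw [if_neg (by rintro ⟨h, -⟩; exact hne h), if_neg (by rintro ⟨h, -⟩; exact hne h),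
    if_pos ⟨rfl, he⟩]

lemma patch_Q {α₀ d A B P Q} {e : KIdx} (he : e ∈ Q) (hne : e.2 ≠ d) (hPQ : ∀ a ∈ P, a ∉ Q) :
    patch α₀ d A B P Q (e.1, e.2, d) = false := by
  unfold patch
  rw [if_neg (by rintro ⟨h, -⟩; exact hne h), if_neg (by rintro ⟨h, -⟩; exact hne h),
    if_neg, if_pos ⟨rfl, he⟩]
  rintro ⟨-, h⟩
  exact hPQ _ h he

lemma patch_eq {α₀ d A B P Q} {c : CIdx} (h1 : c.2.1 ≠ d) (h2 : c.2.2 ≠ d) :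
    patch α₀ d A B P Q c = α₀ c := by
  unfold patch
  rw [if_neg (by rintro ⟨h, -⟩; exact h1 h), if_neg (by rintro ⟨h, -⟩; exact h1 h),
    if_neg (by rintro ⟨h, -⟩; exact h2 h), if_neg (by rintro ⟨h, -⟩; exact h2 h)]

lemma dense_Dset (n : ℕ) (A B P Q : List KIdx) : Dense (Dset n A B P Q) := by
  rw [dense_iff_inter_open]
  rintro U hU ⟨α₀, hα₀⟩
  by_cases hg : (∀ e ∈ A, e ∉ B) ∧ (∀ e ∈ P, e ∉ Q)
  · obtain ⟨I, u, hIu, hsub⟩ := isOpen_pi_iff.1 hU α₀ hα₀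
    classical
    set K : ℕ := (A ++ B ++ P ++ Q).foldr (fun e m => max e.2 m) 0 with hK
    set M : ℕ := I.sup (fun c => max c.2.1 c.2.2) with hM
    set d : ℕ := n + K + M + 1 with hd
    have hKlt : ∀ e ∈ A ++ B ++ P ++ Q, e.2 < d := by
      intro e he
      have := le_foldr_max _ e he
      omega
    have hMlt : ∀ c ∈ I, c.2.1 < d ∧ c.2.2 < d := by
      intro c hc
      have h := Finset.le_sup (f := fun c : CIdx => max c.2.1 c.2.2) hc
      have h1 : c.2.1 ≤ M := le_trans (le_max_left _ _) h
      have h2 : c.2.2 ≤ M := le_trans (le_max_right _ _) h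
      omega
    refine ⟨patch α₀ d A B P Q, ?_, ?_⟩
    · apply hsub
      rw [Set.mem_pi]
      intro c hc
      obtain ⟨h1, h2⟩ := hMlt c hc
      rw [patch_eq (by omega) (by omega)]
      exact (hIu c hc).2
    · intro _
      refine ⟨d, by omega, ?_, ?_, ?_, ?_⟩
      · intro e he
        exact patch_A he
      · intro e he
        exact patch_B he hg.1
      · intro e he
        have h2 : e.2 < d := hKlt e (by simp [he])
        exact patch_P he (by omega)
      · intro e he
        have h2 : e.2 < d := hKlt e (by simp [he])
        exact patch_Q he (by omega) hg.2
  · exact ⟨α₀, hα₀, fun h => absurd h hg⟩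

lemma exists_getElem_ne {l l' : List ℕ} (hlen : l.length = l'.length) (hne : l ≠ l') :
    ∃ m, ∃ (h1 : m < l.length) (h2 : m < l'.length), l[m] ≠ l'[m] := by
  by_contra h
  push_neg at h
  exact hne (List.ext_getElem hlen fun m h1 h2 => h m h1 h2)

lemma key_inj_a {y : ℕ → ℕ → Bool} {E : Finset ℕ} {t : List ℕ} (ht0 : t ≠ [])
    (hsep : ∀ a ∈ E, ∀ b ∈ E, a ≠ b → ∃ i ∈ t, y i a ≠ y i b)
    {s s' : List ℕ} (hs : ∀ a ∈ s, a ∈ E) (hs' : ∀ a ∈ s', a ∈ E)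
    (h : t.map (fun j => s.map (y j)) = t.map (fun j => s'.map (y j))) : s = s' := by
  have h' : ∀ i ∈ t, s.map (y i) = s'.map (y i) := List.map_inj_left.1 h
  obtain ⟨i₀, hi₀⟩ := List.exists_mem_of_ne_nil t ht0
  have hlen : s.length = s'.length := by
    have := congrArg List.length (h' i₀ hi₀)
    simpa using this
  by_contra hne
  obtain ⟨m, h1, h2, hab⟩ := exists_getElem_ne hlen hne
  obtain ⟨i, hit, hy⟩ := hsep _ (hs _ (List.getElem_mem h1)) _ (hs' _ (List.getElem_mem h2)) hab
  have e1 := List.getElem_of_eq (h' i hit) (show m < (s.map (y i)).length by simpa using h1)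
  rw [List.getElem_map, List.getElem_map] at e1
  exact hy e1

lemma map_inj_on' {β : Type*} {f : ℕ → β} {E : Finset ℕ}
    (hf : ∀ a ∈ E, ∀ b ∈ E, f a = f b → a = b) :
    ∀ {t t' : List ℕ}, (∀ a ∈ t, a ∈ E) → (∀ a ∈ t', a ∈ E) → t.map f = t'.map f → t = t'
  | [], [], _, _, _ => rfl
  | [], _ :: _, _, _, h => by simp at h
  | _ :: _, [], _, _, h => by simp at h
  | a :: t, b :: t', ht, ht', h => by
    simp only [List.map_cons, List.cons.injEq] at h
    have hab : a = b := hf a (ht a (by simp)) b (ht' b (by simp)) h.1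
    have : t = t' := map_inj_on' hf (fun c hc => ht c (by simp [hc]))
      (fun c hc => ht' c (by simp [hc])) h.2
    rw [hab, this]

lemma key_inj_b {y : ℕ → ℕ → Bool} {E : Finset ℕ} {s : List ℕ}
    (hsep : ∀ j₁ ∈ E, ∀ j₂ ∈ E, j₁ ≠ j₂ → ∃ a ∈ s, y j₁ a ≠ y j₂ a)
    {t t' : List ℕ} (ht : ∀ j ∈ t, j ∈ E) (ht' : ∀ j ∈ t', j ∈ E)
    (h : t.map (fun j => s.map (y j)) = t'.map (fun j => s.map (y j))) : t = t' := by
  refine map_inj_on' (fun j₁ h1 j₂ h2 heq => ?_) ht ht' h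
  by_contra hne
  obtain ⟨a, ha, hY⟩ := hsep j₁ h1 j₂ h2 hne
  exact hY (List.map_inj_left.1 heq a ha)

lemma infinite_of_forall_exists_ge {S : Set (List ℕ × ℕ)} (h : ∀ n, ∃ p ∈ S, n ≤ p.2) :
    S.Infinite := by
  by_contra hfin
  rw [Set.not_infinite] at hfin
  obtain ⟨b, hb⟩ := (hfin.image Prod.snd).bddAbove
  obtain ⟨p, hp, hge⟩ := h (b + 1)
  have : p.2 ≤ b := hb ⟨p, hp, rfl⟩
  omega

lemma exists_sep_list {P : ℕ → ℕ → ℕ → Prop} (h : ∀ a b, a ≠ b → ∃ i, P i a b) (E : Finset ℕ) :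
    ∃ t : List ℕ, ∀ a ∈ E, ∀ b ∈ E, a ≠ b → ∃ i ∈ t, P i a b := by
  classical
  choose f hf using h
  refine ⟨(E ×ˢ E).toList.map (fun ab => if hne : ab.1 ≠ ab.2 then f ab.1 ab.2 hne else 0),
    fun a ha b hb hne => ⟨f a b hne, List.mem_map.2 ⟨(a, b), ?_, dif_pos hne⟩, hf a b hne⟩⟩
  simp [Finset.mem_toList, Finset.mem_product, ha, hb]

/-- for a comeager set of `α`, for every separated `x` and every
injective separated `y`, the pair `(γ_α(x), γ_α(y))` satisfies the genericity
conditions (2)(a) and (2)(b). -/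
theorem gammaA_generic_conditions :
    ∃ A : Set (List (List Bool) × ℕ × ℕ → Bool),
      A ∈ residual (List (List Bool) × ℕ × ℕ → Bool) ∧
      ∀ α ∈ A, ∀ x y : ℕ → ℕ → Bool,
        SeqSeparated x → Function.Injective y → SeqSeparated y →
        ((∀ (T : Finset NIdx) (τ : NIdx → Bool),
            {p : NIdx | ∀ q ∈ T, gammaA α y p q = τ q}.Infinite) ∧
         (∀ (T₁ T₂ : Finset NIdx) (τ₁ τ₂ : NIdx → Bool),
            {q : NIdx | (∀ p ∈ T₁, gammaA α y p q = τ₁ p) ∧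
              (∀ p ∈ T₂, gammaA α x q p = τ₂ p)}.Infinite)) := by
  classical
  refine ⟨⋂ i : ℕ × List KIdx × List KIdx × List KIdx × List KIdx,
      Dset i.1 i.2.1 i.2.2.1 i.2.2.2.1 i.2.2.2.2, ?_, ?_⟩
  · exact countable_iInter_mem.2 fun i =>
      residual_of_dense_open (isOpen_Dset _ _ _ _ _) (dense_Dset _ _ _ _ _)
  · intro α hα x y hxsep hyinj hysep
    constructor
    · -- condition (a)
      intro T τ
      set E : Finset ℕ := T.biUnion (fun q => q.1.toFinset) with hE
      obtain ⟨t₀, ht₀⟩ := exists_sep_list (P := fun i a b => y i a ≠ y i b) hysep E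
      set t : List ℕ := 0 :: t₀ with ht
      have htne : t ≠ [] := by simp [ht]
      have hsep' : ∀ a ∈ E, ∀ b ∈ E, a ≠ b → ∃ i ∈ t, y i a ≠ y i b := by
        intro a ha b hb hne
        obtain ⟨i, hi, hh⟩ := ht₀ a ha b hb hne
        exact ⟨i, by simp [ht, hi], hh⟩
      set key : NIdx → KIdx := fun q => (t.map (fun j => q.1.map (y j)), q.2) with hkey
      have hmemE : ∀ q ∈ T, ∀ a ∈ q.1, a ∈ E := fun q hq a ha =>
        Finset.mem_biUnion.2 ⟨q, hq, List.mem_toFinset.2 ha⟩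
      have hkeyinj : ∀ q ∈ T, ∀ q' ∈ T, key q = key q' → q = q' := by
        intro q hq q' hq' hk
        exact Prod.ext_iff.2
          ⟨key_inj_a htne hsep' (hmemE q hq) (hmemE q' hq') (congrArg Prod.fst hk),
           (congrArg Prod.snd hk :)⟩
      set P : List KIdx := (T.toList.filter (fun q => τ q)).map key with hP
      set Q : List KIdx := (T.toList.filter (fun q => !τ q)).map key with hQ
      have hPQ : ∀ e ∈ P, e ∉ Q := by
        intro e heP heQ
        obtain ⟨q, hq, rfl⟩ := List.mem_map.1 heP
        obtain ⟨q', hq', hk⟩ := List.mem_map.1 heQ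
        rw [List.mem_filter] at hq hq'
        have hqq : q' = q :=
          hkeyinj q' (Finset.mem_toList.1 hq'.1) q (Finset.mem_toList.1 hq.1) hk
        rw [hqq] at hq'
        have h1 := hq.2
        have h2 := hq'.2
        simp at h1 h2
        simp [h1] at h2
      apply infinite_of_forall_exists_ge
      intro n
      have hD := Set.mem_iInter.1 hα (n, [], [], P, Q)
      obtain ⟨d, hdn, -, -, hPt, hQf⟩ := hD ⟨by simp, hPQ⟩
      refine ⟨(t, d), ?_, hdn⟩
      intro q hq
      show gammaA α y (t, d) q = τ q
      cases hτ : τ q with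
      | true =>
        exact hPt _ (List.mem_map.2 ⟨q,
          List.mem_filter.2 ⟨Finset.mem_toList.2 hq, by simp [hτ]⟩, rfl⟩)
      | false =>
        exact hQf _ (List.mem_map.2 ⟨q,
          List.mem_filter.2 ⟨Finset.mem_toList.2 hq, by simp [hτ]⟩, rfl⟩)
    · -- condition (b)
      intro T₁ T₂ τ₁ τ₂
      set E₁ : Finset ℕ := T₁.biUnion (fun p => p.1.toFinset) with hE₁
      set E₂ : Finset ℕ := T₂.biUnion (fun p => p.1.toFinset) with hE₂
      have hyne : ∀ a b : ℕ, a ≠ b → ∃ i, y a i ≠ y b i := by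
        intro a b hab
        by_contra hc
        push_neg at hc
        exact hab (hyinj (funext hc))
      obtain ⟨s₁, hs₁⟩ := exists_sep_list (P := fun i a b => y a i ≠ y b i) hyne E₁
      obtain ⟨s₂, hs₂⟩ := exists_sep_list (P := fun i a b => x i a ≠ x i b) hxsep E₂
      set s : List ℕ := 0 :: (s₁ ++ s₂) with hs
      have hsne : s ≠ [] := by simp [hs]
      have hsepY : ∀ j₁ ∈ E₁, ∀ j₂ ∈ E₁, j₁ ≠ j₂ → ∃ a ∈ s, y j₁ a ≠ y j₂ a := by
        intro j₁ h1 j₂ h2 hne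
        obtain ⟨a, ha, hh⟩ := hs₁ j₁ h1 j₂ h2 hne
        exact ⟨a, by simp [hs, ha], hh⟩
      have hsepX : ∀ i₁ ∈ E₂, ∀ i₂ ∈ E₂, i₁ ≠ i₂ → ∃ a ∈ s, x a i₁ ≠ x a i₂ := by
        intro i₁ h1 i₂ h2 hne
        obtain ⟨a, ha, hh⟩ := hs₂ i₁ h1 i₂ h2 hne
        exact ⟨a, by simp [hs, ha], hh⟩
      set key₁ : NIdx → KIdx := fun p => (p.1.map (fun j => s.map (y j)), p.2) with hk₁
      set key₂ : NIdx → KIdx := fun p => (s.map (fun j => p.1.map (x j)), p.2) with hk₂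
      have hmem₁ : ∀ p ∈ T₁, ∀ a ∈ p.1, a ∈ E₁ := fun p hp a ha =>
        Finset.mem_biUnion.2 ⟨p, hp, List.mem_toFinset.2 ha⟩
      have hmem₂ : ∀ p ∈ T₂, ∀ a ∈ p.1, a ∈ E₂ := fun p hp a ha =>
        Finset.mem_biUnion.2 ⟨p, hp, List.mem_toFinset.2 ha⟩
      have hkey₁inj : ∀ p ∈ T₁, ∀ p' ∈ T₁, key₁ p = key₁ p' → p = p' := by
        intro p hp p' hp' hk
        exact Prod.ext_iff.2
          ⟨key_inj_b hsepY (hmem₁ p hp) (hmem₁ p' hp') (congrArg Prod.fst hk),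
           (congrArg Prod.snd hk :)⟩
      have hkey₂inj : ∀ p ∈ T₂, ∀ p' ∈ T₂, key₂ p = key₂ p' → p = p' := by
        intro p hp p' hp' hk
        exact Prod.ext_iff.2
          ⟨key_inj_a hsne hsepX (hmem₂ p hp) (hmem₂ p' hp') (congrArg Prod.fst hk),
           (congrArg Prod.snd hk :)⟩
      set A : List KIdx := (T₁.toList.filter (fun p => τ₁ p)).map key₁ with hA
      set B : List KIdx := (T₁.toList.filter (fun p => !τ₁ p)).map key₁ with hB
      set Pl : List KIdx := (T₂.toList.filter (fun p => τ₂ p)).map key₂ with hPl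
      set Ql : List KIdx := (T₂.toList.filter (fun p => !τ₂ p)).map key₂ with hQl
      have hAB : ∀ e ∈ A, e ∉ B := by
        intro e heA heB
        obtain ⟨p, hp, rfl⟩ := List.mem_map.1 heA
        obtain ⟨p', hp', hk⟩ := List.mem_map.1 heB
        rw [List.mem_filter] at hp hp'
        have hpp : p' = p :=
          hkey₁inj p' (Finset.mem_toList.1 hp'.1) p (Finset.mem_toList.1 hp.1) hk
        rw [hpp] at hp'
        have h1 := hp.2
        have h2 := hp'.2
        simp at h1 h2
        simp [h1] at h2
      have hPQ : ∀ e ∈ Pl, e ∉ Ql := by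
        intro e heP heQ
        obtain ⟨p, hp, rfl⟩ := List.mem_map.1 heP
        obtain ⟨p', hp', hk⟩ := List.mem_map.1 heQ
        rw [List.mem_filter] at hp hp'
        have hpp : p' = p :=
          hkey₂inj p' (Finset.mem_toList.1 hp'.1) p (Finset.mem_toList.1 hp.1) hk
        rw [hpp] at hp'
        have h1 := hp.2
        have h2 := hp'.2
        simp at h1 h2
        simp [h1] at h2
      apply infinite_of_forall_exists_ge
      intro n
      have hD := Set.mem_iInter.1 hα (n, A, B, Pl, Ql)
      obtain ⟨d, hdn, hAt, hBf, hPt, hQf⟩ := hD ⟨hAB, hPQ⟩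
      refine ⟨(s, d), ⟨?_, ?_⟩, hdn⟩
      · intro p hp
        show gammaA α y p (s, d) = τ₁ p
        cases hτ : τ₁ p with
        | true =>
          exact hAt _ (List.mem_map.2 ⟨p,
            List.mem_filter.2 ⟨Finset.mem_toList.2 hp, by simp [hτ]⟩, rfl⟩)
        | false =>
          exact hBf _ (List.mem_map.2 ⟨p,
            List.mem_filter.2 ⟨Finset.mem_toList.2 hp, by simp [hτ]⟩, rfl⟩)
      · intro p hp
        show gammaA α x (s, d) p = τ₂ p
        cases hτ : τ₂ p with
        | true =>
          exact hPt _ (List.mem_map.2 ⟨p,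
            List.mem_filter.2 ⟨Finset.mem_toList.2 hp, by simp [hτ]⟩, rfl⟩)
        | false =>
          exact hQf _ (List.mem_map.2 ⟨p,
            List.mem_filter.2 ⟨Finset.mem_toList.2 hp, by simp [hτ]⟩, rfl⟩)
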